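/- arXiv:1607.06432 — 2 statements merged into one kernel-verified Lean document; each statement's English description precedes it below -/
import Mathlib

section
/- Let 0 < η < 1, let 𝒮 be a countable η-sparse family of cubes in ℝⁿ, and let w ∈ A∞. Then for every cube R, ∑_{Q∈𝒮, Q⊆R} w(Q) ≤ η⁻¹ [w]_{A∞} w(R). -/
open MeasureTheory Set Filter ENNReal

noncomputable section

/-- Euclidean space `ℝⁿ` with Lebesgue measure. -/
abbrev En (n : ℕ) := EuclideanSpace ℝ (Fin n)

/-- An axis-parallel (closed) cube in `ℝⁿ`, given by its lower corner and side length. -/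
structure Cube (n : ℕ) where
  corner : Fin n → ℝ
  side : ℝ
  side_pos : 0 < side

namespace Cube

/-- The underlying set of a cube. -/
def set {n : ℕ} (Q : Cube n) : Set (En n) :=
  {x | ∀ i, Q.corner i ≤ x i ∧ x i ≤ Q.corner i + Q.side}

end Cube

/-- Weighted measure `w(s) = ∫_s w dx` of a set, as an extended real. -/
def wMeas {n : ℕ} (w : En n → ℝ) (s : Set (En n)) : ℝ≥0∞ :=
  ∫⁻ x in s, ENNReal.ofReal (w x)

/-- `(|s|⁻¹ ∫_s |f|^q)^{1/q}`. -/
def avgq {n : ℕ} (q : ℝ) (f : En n → ℝ) (s : Set (En n)) : ℝ≥0∞ :=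
  ((volume s)⁻¹ * ∫⁻ y in s, ENNReal.ofReal |f y| ^ q) ^ (1/q)

/-- The maximal operator `M_q f(x) = sup_{Q ∋ x} (|Q|⁻¹ ∫_Q |f|^q)^{1/q}`,
supremum over all axis-parallel cubes containing `x`. -/
def Mq {n : ℕ} (q : ℝ) (f : En n → ℝ) (x : En n) : ℝ≥0∞ :=
  ⨆ (Q : Cube n) (_ : x ∈ Q.set), avgq q f Q.set

/-- The Hardy–Littlewood maximal operator `M = M_1`. -/
def MHL {n : ℕ} (f : En n → ℝ) (x : En n) : ℝ≥0∞ := Mq 1 f x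

/-- `L^p(w)` norm `(∫ |f|^p w dx)^{1/p}` with an `ℝ≥0∞`-valued weight `w`. -/
def wnormE {n : ℕ} (p : ℝ) (w : En n → ℝ≥0∞) (f : En n → ℝ) : ℝ≥0∞ :=
  (∫⁻ x, ENNReal.ofReal |f x| ^ p * w x) ^ (1/p)

/-- `L^p(w)` norm `(∫ |f|^p w dx)^{1/p}` with a real weight `w`. -/
def wnorm {n : ℕ} (p : ℝ) (w : En n → ℝ) (f : En n → ℝ) : ℝ≥0∞ :=
  wnormE p (fun x => ENNReal.ofReal (w x)) f

/-- The Fujii–Wilson `A_∞` constant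
`[w]_{A_∞} = sup_Q w(Q)⁻¹ ∫_Q M(w χ_Q) dx` (sup over cubes with `w(Q) > 0`). -/
def Ainf {n : ℕ} (w : En n → ℝ) : ℝ≥0∞ :=
  ⨆ (Q : Cube n) (_ : 0 < wMeas w Q.set),
    (wMeas w Q.set)⁻¹ * ∫⁻ x in Q.set, MHL (Q.set.indicator w) x

/-- The `A₁` constant of a weight: the least `κ` such that `Mw ≤ κ·w` a.e. -/
def A1const {n : ℕ} (w : En n → ℝ) : ℝ≥0∞ :=
  sInf {κ : ℝ≥0∞ | ∀ᵐ x : En n, MHL w x ≤ κ * ENNReal.ofReal (w x)}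

/-- The `A_q` constant of a weight, for `1 < q < ∞`. -/
def Aqconst {n : ℕ} (q : ℝ) (w : En n → ℝ) : ℝ≥0∞ :=
  ⨆ Q : Cube n, ((volume Q.set)⁻¹ * wMeas w Q.set) *
    ((volume Q.set)⁻¹ * ∫⁻ x in Q.set, ENNReal.ofReal (w x) ^ (-(1/(q-1)))) ^ (q-1)

/-- The `A_q` constant, with the convention that for `q = 1` it is the `A₁` constant. -/
def AqC {n : ℕ} (q : ℝ) (w : En n → ℝ) : ℝ≥0∞ :=
  if q = 1 then A1const w else Aqconst q w

/-- The BMO norm of `b`: `sup_Q |Q|⁻¹ ∫_Q |b - b_Q|`. -/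
def bmoNorm {n : ℕ} (b : En n → ℝ) : ℝ≥0∞ :=
  ⨆ Q : Cube n, (volume Q.set)⁻¹ *
    ∫⁻ x in Q.set, ENNReal.ofReal |b x - ⨍ y in Q.set, b y|

/-- Radial projection onto the unit sphere (junk value `0` at the origin). -/
def dir {n : ℕ} (y : En n) : En n := ‖y‖⁻¹ • y

/-- The surface measure on the unit sphere `S^{n-1}`. -/
def sphMeas (n : ℕ) : Measure (Metric.sphere (0 : En n) 1) :=
  (volume : Measure (En n)).toSphere

/-- `‖Ω‖_{L^∞(S^{n-1})}`. -/
def sphLinfty {n : ℕ} (Ω : En n → ℝ) : ℝ≥0∞ :=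
  eLpNorm (fun ω : Metric.sphere (0 : En n) 1 => Ω ω) ∞ (sphMeas n)

/-- `Ω` has mean zero on the unit sphere. -/
def sphMeanZero {n : ℕ} (Ω : En n → ℝ) : Prop :=
  ∫ ω : Metric.sphere (0 : En n) 1, Ω ω ∂(sphMeas n) = 0

/-- `g` is a version of `T_Ω f`: for a.e. `x` the truncated singular integrals
`∫_{|y|>ε} Ω(y/|y|)|y|^{-n} f(x-y) dy` converge to `g x` as `ε → 0⁺`. -/
def IsTOmega {n : ℕ} (Ω f g : En n → ℝ) : Prop :=
  ∀ᵐ x : En n, Tendsto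
    (fun ε : ℝ => ∫ y in {y : En n | ε < ‖y‖}, Ω (dir y) * ‖y‖ ^ (-(n:ℝ)) * f (x - y))
    (nhdsWithin 0 (Set.Ioi 0)) (nhds (g x))

/-- `h` is a version of the commutator `[b, T_Ω] f`. -/
def IsCommTOmega {n : ℕ} (Ω b f h : En n → ℝ) : Prop :=
  ∀ᵐ x : En n, Tendsto
    (fun ε : ℝ => ∫ y in {y : En n | ε < ‖x - y‖},
      (b x - b y) * Ω (dir (x - y)) * ‖x - y‖ ^ (-(n:ℝ)) * f y)
    (nhdsWithin 0 (Set.Ioi 0)) (nhds (h x))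

/-- The dilated mollifier `φ_m(x) = 2^{-mn} φ(2^{-m} x)`. -/
def mollify {n : ℕ} (φ : En n → ℝ) (m : ℤ) : En n → ℝ :=
  fun x => (2:ℝ) ^ (-(m * (n:ℤ))) * φ ((2:ℝ) ^ (-m) • x)

/-- The truncated kernel `K_k = K·χ_{{2^k ≤ |y| < 2^{k+1}}}`, `K(y) = Ω(y/|y|)|y|^{-n}`. -/
def Kk {n : ℕ} (Ω : En n → ℝ) (k : ℤ) : En n → ℝ :=
  ({y : En n | (2:ℝ)^k ≤ ‖y‖ ∧ ‖y‖ < (2:ℝ)^(k+1)}).indicator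
    (fun y => Ω (dir y) * ‖y‖ ^ (-(n:ℝ)))

/-- Convolution of real-valued functions on `ℝⁿ`. -/
def conv {n : ℕ} (f g : En n → ℝ) : En n → ℝ :=
  convolution f g (ContinuousLinearMap.lsmul ℝ ℝ) volume

/-- `Δ_j φ_k := φ_{k-N(j)} - φ_{k-N(j-1)}` for `j ≥ 1`, and `Δ_0 φ_k := φ_k`. -/
def deltaPhi {n : ℕ} (φ : En n → ℝ) (N : ℕ → ℕ) (j : ℕ) (k : ℤ) : En n → ℝ :=
  if j = 0 then mollify φ k
  else fun x => mollify φ (k - (N j : ℤ)) x - mollify φ (k - (N (j-1) : ℤ)) x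

/-- The piece `T̃_j^N f (x) = ∑_{k ∈ ℤ} (K_k * (f * Δ_j φ_k))(x)`. -/
def Ttilde {n : ℕ} (φ Ω : En n → ℝ) (N : ℕ → ℕ) (j : ℕ) (f : En n → ℝ) : En n → ℝ :=
  fun x => ∑' k : ℤ, conv (Kk Ω k) (conv f (deltaPhi φ N j k)) x

/-- `h` is a version of the commutator `[b, T̃_j^N] f`: for a.e. `x` the series
`∑_k (b(x)·(K_k*(f*Δ_jφ_k))(x) - (K_k*((bf)*Δ_jφ_k))(x))` sums to `h x`. -/
def IsCommTtilde {n : ℕ} (φ Ω b : En n → ℝ) (N : ℕ → ℕ) (j : ℕ) (f h : En n → ℝ) : Prop :=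
  ∀ᵐ x : En n, HasSum (fun k : ℤ =>
    b x * conv (Kk Ω k) (conv f (deltaPhi φ N j k)) x
      - conv (Kk Ω k) (conv (fun y => b y * f y) (deltaPhi φ N j k)) x) (h x)

/-- The Luxemburg norm `‖f‖_{Ψ(L),s} = inf{λ > 0 : |s|⁻¹ ∫_s Ψ(|f|/λ) ≤ 1}`. -/
def luxNorm {n : ℕ} (Ψ : ℝ → ℝ) (f : En n → ℝ) (s : Set (En n)) : ℝ≥0∞ :=
  sInf (ENNReal.ofReal '' {lam : ℝ | 0 < lam ∧
    (volume s)⁻¹ * ∫⁻ x in s, ENNReal.ofReal (Ψ (|f x| / lam)) ≤ 1})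

/-- The Orlicz maximal operator `M_{Ψ(L)} f(x) = sup_{Q ∋ x} ‖f‖_{Ψ(L),Q}`. -/
def MOrlicz {n : ℕ} (Ψ : ℝ → ℝ) (f : En n → ℝ) (x : En n) : ℝ≥0∞ :=
  ⨆ (Q : Cube n) (_ : x ∈ Q.set), luxNorm Ψ f Q.set

/-- An `η`-sparse family of cubes. -/
def IsSparse {n : ℕ} {ι : Type} (η : ℝ) (S : ι → Cube n) : Prop :=
  ∃ E : ι → Set (En n), (∀ i, MeasurableSet (E i) ∧ E i ⊆ (S i).set ∧
    ENNReal.ofReal η * volume (S i).set ≤ volume (E i)) ∧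
    Pairwise (Function.onFun Disjoint E)

/-- The dyadic cube `2^{-k}([0,1)ⁿ + m)` of the standard dyadic grid. -/
def dyadicCube (n : ℕ) (k : ℤ) (m : Fin n → ℤ) : Set (En n) :=
  {x | ∀ i, (m i : ℝ) * (2:ℝ)^(-k) ≤ x i ∧ x i < ((m i : ℝ) + 1) * (2:ℝ)^(-k)}

/-- `Φ(t) = t(1 + log⁺ t)`, the Young function of `L log L`. -/
def PhiLlogL : ℝ → ℝ := fun t => t * (1 + max (Real.log t) 0)

/-- The sequence `N(0) = 0`, `N(j) = 2^j` for `j ≥ 1` (real-valued). -/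
def Nexp : ℕ → ℝ := fun j => if j = 0 then 0 else 2 ^ j


lemma Cube.isCompact_set {n : ℕ} (Q : Cube n) : IsCompact Q.set := by
  set e := PiLp.continuousLinearEquiv 2 ℝ (fun _ : Fin n => ℝ)
  have hK : IsCompact (Set.univ.pi fun i => Set.Icc (Q.corner i) (Q.corner i + Q.side)) :=
    isCompact_univ_pi fun i => isCompact_Icc
  have h : Q.set = e.symm '' (Set.univ.pi fun i => Set.Icc (Q.corner i) (Q.corner i + Q.side)) := by
    rw [ContinuousLinearEquiv.image_symm_eq_preimage]
    ext x
    simp only [Cube.set, Set.mem_preimage, Set.mem_pi, Set.mem_univ, Set.mem_Icc,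
      forall_true_left, Set.mem_setOf_eq]
    rfl
  rw [h]; exact hK.image e.symm.continuous

lemma Cube.measurableSet_set {n : ℕ} (Q : Cube n) : MeasurableSet Q.set :=
  Q.isCompact_set.measurableSet

lemma Cube.volume_set {n : ℕ} (Q : Cube n) :
    volume Q.set = ENNReal.ofReal Q.side ^ n := by
  have h : Q.set = (MeasurableEquiv.toLp 2 (Fin n → ℝ)).symm ⁻¹'
      (Set.univ.pi fun i => Set.Icc (Q.corner i) (Q.corner i + Q.side)) := by
    ext x
    simp only [Cube.set, Set.mem_preimage, Set.mem_pi, Set.mem_univ, Set.mem_Icc,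
      forall_true_left, Set.mem_setOf_eq]
    rfl
  rw [h, (EuclideanSpace.volume_preserving_symm_measurableEquiv_toLp (Fin n)).measure_preimage
    (MeasurableSet.univ_pi fun i => measurableSet_Icc).nullMeasurableSet]
  rw [volume_pi_pi]
  simp [Real.volume_Icc]

lemma Cube.volume_pos {n : ℕ} (Q : Cube n) : 0 < volume Q.set := by
  rw [Q.volume_set]
  exact ENNReal.pow_pos (ENNReal.ofReal_pos.2 Q.side_pos) n

lemma Cube.volume_lt_top {n : ℕ} (Q : Cube n) : volume Q.set < ⊤ := by
  rw [Q.volume_set]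
  exact ENNReal.pow_lt_top ENNReal.ofReal_lt_top

lemma tsum_setLIntegral_le_of_disjoint {α : Type*} [MeasurableSpace α] {μ : Measure α}
    {ι' : Type*} [Countable ι'] (E : ι' → Set α) (hm : ∀ i, MeasurableSet (E i))
    (hd : Pairwise (Function.onFun Disjoint E)) {s : Set α} (hsub : ∀ i, E i ⊆ s)
    (f : α → ℝ≥0∞) :
    ∑' i, ∫⁻ x in E i, f x ∂μ ≤ ∫⁻ x in s, f x ∂μ := by
  rw [← lintegral_iUnion hm hd f]
  exact lintegral_mono_set (Set.iUnion_subset hsub)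

set_option maxHeartbeats 1000000

/-- The Carleson-type packing condition for sparse families and `A_∞` weights. -/
theorem sparse_carleson (n : ℕ) (hn : 1 ≤ n) (η : ℝ) (hη0 : 0 < η) (hη1 : η < 1)
    (ι : Type) [Countable ι] (S : ι → Cube n) (hS : IsSparse η S)
    (w : En n → ℝ) (hw0 : ∀ x, 0 ≤ w x) (hwloc : LocallyIntegrable w volume) (hwA : Ainf w < ⊤) (R : Cube n) :
    (∑' i : {i : ι // (S i).set ⊆ R.set}, wMeas w (S i.1).set) ≤
      (ENNReal.ofReal η)⁻¹ * Ainf w * wMeas w R.set := by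
  classical
  obtain ⟨E, hE, hEdisj⟩ := hS
  by_cases hR0 : wMeas w R.set = 0
  · have hz : ∀ i : {i : ι // (S i).set ⊆ R.set}, wMeas w (S i.1).set = 0 := by
      intro i
      refine le_antisymm ?_ zero_le
      rw [← hR0]
      exact lintegral_mono_set i.2
    rw [tsum_congr hz]
    simp
  · have hη : (0:ℝ≥0∞) < ENNReal.ofReal η := ENNReal.ofReal_pos.2 hη0
    have hRfin : wMeas w R.set < ⊤ := by
      have hint : IntegrableOn w R.set volume :=
        hwloc.integrableOn_isCompact R.isCompact_set
      exact hint.lintegral_lt_top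
    have hstep : ∀ i : {i : ι // (S i).set ⊆ R.set},
        ENNReal.ofReal η * wMeas w (S i.1).set ≤
          ∫⁻ x in E i.1, MHL (R.set.indicator w) x := by
      intro i
      obtain ⟨hEm, hEsub, hEvol⟩ := hE i.1
      set Q := S i.1 with hQ
      set c : ℝ≥0∞ := (volume Q.set)⁻¹ * wMeas w Q.set with hc
      have havg : avgq 1 (R.set.indicator w) Q.set = c := by
        rw [avgq, hc]
        have hint : ∫⁻ y in Q.set, ENNReal.ofReal |R.set.indicator w y| ^ (1:ℝ)
            = wMeas w Q.set := by
          rw [wMeas]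
          refine setLIntegral_congr_fun Q.measurableSet_set (fun y hy => ?_)
          rw [ENNReal.rpow_one, Set.indicator_of_mem (i.2 hy), abs_of_nonneg (hw0 y)]
        rw [hint]
        norm_num
      have hlb : ∀ x, x ∈ E i.1 → c ≤ MHL (R.set.indicator w) x := by
        intro x hx
        have hxQ : x ∈ Q.set := hEsub hx
        have h := le_iSup₂ (f := fun (Q' : Cube n) (_ : x ∈ Q'.set) =>
          avgq 1 (R.set.indicator w) Q'.set) Q hxQ
        rw [havg] at h
        exact h
      have hcancel : (volume Q.set)⁻¹ * volume Q.set = 1 :=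
        ENNReal.inv_mul_cancel Q.volume_pos.ne' Q.volume_lt_top.ne
      have hkey : c * (ENNReal.ofReal η * volume Q.set)
          = ENNReal.ofReal η * wMeas w Q.set := by
        rw [hc]
        calc (volume Q.set)⁻¹ * wMeas w Q.set * (ENNReal.ofReal η * volume Q.set)
            = ((volume Q.set)⁻¹ * volume Q.set) * (ENNReal.ofReal η * wMeas w Q.set) := by
              ring
          _ = ENNReal.ofReal η * wMeas w Q.set := by rw [hcancel, one_mul]
      calc ENNReal.ofReal η * wMeas w Q.set
          = c * (ENNReal.ofReal η * volume Q.set) := hkey.symm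
        _ ≤ c * volume (E i.1) := mul_le_mul_right hEvol _
        _ = ∫⁻ _ in E i.1, c := (setLIntegral_const _ _).symm
        _ ≤ ∫⁻ x in E i.1, MHL (R.set.indicator w) x :=
            lintegral_mono_ae ((ae_restrict_mem hEm).mono hlb)
    have hsubdisj : Pairwise (Function.onFun Disjoint
        fun i : {i : ι // (S i).set ⊆ R.set} => E i.1) :=
      fun i j hij => hEdisj (Subtype.coe_injective.ne hij)
    have hA : ∫⁻ x in R.set, MHL (R.set.indicator w) x ≤ Ainf w * wMeas w R.set := by
      have hAle : (wMeas w R.set)⁻¹ * ∫⁻ x in R.set, MHL (R.set.indicator w) x ≤ Ainf w :=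
        le_iSup₂ (f := fun (Q : Cube n) (_ : 0 < wMeas w Q.set) =>
          (wMeas w Q.set)⁻¹ * ∫⁻ x in Q.set, MHL (Q.set.indicator w) x) R
          (pos_iff_ne_zero.mpr hR0)
      calc ∫⁻ x in R.set, MHL (R.set.indicator w) x
          = wMeas w R.set *
            ((wMeas w R.set)⁻¹ * ∫⁻ x in R.set, MHL (R.set.indicator w) x) := by
            rw [← mul_assoc, ENNReal.mul_inv_cancel hR0 hRfin.ne, one_mul]
        _ ≤ wMeas w R.set * Ainf w := mul_le_mul_right hAle _
        _ = Ainf w * wMeas w R.set := mul_comm _ _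
    have hsum : ENNReal.ofReal η *
        ∑' i : {i : ι // (S i).set ⊆ R.set}, wMeas w (S i.1).set ≤
        Ainf w * wMeas w R.set := by
      calc ENNReal.ofReal η * ∑' i : {i : ι // (S i).set ⊆ R.set}, wMeas w (S i.1).set
          = ∑' i : {i : ι // (S i).set ⊆ R.set}, ENNReal.ofReal η * wMeas w (S i.1).set :=
            ENNReal.tsum_mul_left.symm
        _ ≤ ∑' i : {i : ι // (S i).set ⊆ R.set}, ∫⁻ x in E i.1, MHL (R.set.indicator w) x :=
            ENNReal.tsum_le_tsum hstep
        _ ≤ ∫⁻ x in R.set, MHL (R.set.indicator w) x :=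
            tsum_setLIntegral_le_of_disjoint (fun i : {i : ι // (S i).set ⊆ R.set} => E i.1)
              (fun i => (hE i.1).1) hsubdisj (fun i => ((hE i.1).2.1).trans i.2) _
        _ ≤ Ainf w * wMeas w R.set := hA
    calc ∑' i : {i : ι // (S i).set ⊆ R.set}, wMeas w (S i.1).set
        = (ENNReal.ofReal η)⁻¹ *
          (ENNReal.ofReal η * ∑' i : {i : ι // (S i).set ⊆ R.set}, wMeas w (S i.1).set) := by
          rw [← mul_assoc, ENNReal.inv_mul_cancel hη.ne' ENNReal.ofReal_ne_top, one_mul]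
      _ ≤ (ENNReal.ofReal η)⁻¹ * (Ainf w * wMeas w R.set) := mul_le_mul_right hsum _
      _ = (ENNReal.ofReal η)⁻¹ * Ainf w * wMeas w R.set := (mul_assoc _ _ _).symm
end
end

section
/- Let 𝒟 be the standard dyadic grid in ℝⁿ, let w be a weight that is positive almost everywhere, and let {a_Q}_{Q∈𝒟} be nonnegative numbers satisfying the Carleson condition: there is A > 0 such that ∑_{Q∈𝒟, Q⊆R} a_Q ≤ A·w(R) for every R ∈ 𝒟. Then for every p ∈ (1,∞) and every nonnegative f ∈ L^p(w), (∑_{Q∈𝒟} a_Q ((1/w(Q)) ∫_Q f w dx)^p)^{1/p} ≤ A^{1/p} · p' · ‖f‖_{L^p(w)}, where p' := p/(p−1). -/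
open MeasureTheory Set Filter ENNReal

noncomputable section

namespace DCE

variable {n : ℕ}

lemma proj_meas (i : Fin n) : Measurable (fun x : En n => x i) :=
  (EuclideanSpace.proj i).continuous.measurable

lemma dyadicCube_eq_iInter (k : ℤ) (m : Fin n → ℤ) :
    dyadicCube n k m = ⋂ i, (fun x : En n => x i) ⁻¹'
      (Set.Ico ((m i : ℝ) * (2:ℝ)^(-k)) (((m i : ℝ)+1) * (2:ℝ)^(-k))) := by
  ext x
  simp [dyadicCube, Set.mem_Ico]

lemma measurableSet_dyadicCube (k : ℤ) (m : Fin n → ℤ) :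
    MeasurableSet (dyadicCube n k m) := by
  rw [dyadicCube_eq_iInter]
  exact MeasurableSet.iInter fun i => (proj_meas i) measurableSet_Ico

lemma isCompact_box (a b : Fin n → ℝ) :
    IsCompact {x : En n | ∀ i, a i ≤ x i ∧ x i ≤ b i} := by
  have : {x : En n | ∀ i, a i ≤ x i ∧ x i ≤ b i}
      = (EuclideanSpace.equiv (Fin n) ℝ).toHomeomorph ⁻¹'
        (Set.univ.pi fun i => Set.Icc (a i) (b i)) := by
    ext x
    simp only [Set.mem_preimage, Set.mem_pi, Set.mem_univ, forall_true_left, Set.mem_Icc,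
      Set.mem_setOf_eq]
    rfl
  rw [this, (EuclideanSpace.equiv (Fin n) ℝ).toHomeomorph.isCompact_preimage]
  exact isCompact_univ_pi fun i => isCompact_Icc

lemma isCompact_closure_dyadic (k : ℤ) (m : Fin n → ℤ) :
    ∃ C : Set (En n), IsCompact C ∧ dyadicCube n k m ⊆ C := by
  refine ⟨_, isCompact_box (fun i => (m i : ℝ) * (2:ℝ)^(-k))
    (fun i => ((m i : ℝ)+1) * (2:ℝ)^(-k)), ?_⟩
  intro x hx i
  exact ⟨(hx i).1, (hx i).2.le⟩

lemma volume_dyadicCube_pos (k : ℤ) (m : Fin n → ℤ) :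
    0 < volume (dyadicCube n k m) := by
  set a : Fin n → ℝ := fun i => (m i : ℝ) * (2:ℝ)^(-k) with ha
  set b : Fin n → ℝ := fun i => ((m i : ℝ)+1) * (2:ℝ)^(-k) with hb
  have hab : ∀ i, a i < b i := by
    intro i
    have : (0:ℝ) < (2:ℝ)^(-k) := by positivity
    simp only [ha, hb]
    nlinarith
  have hopen : IsOpen (⋂ i, (fun x : En n => x i) ⁻¹' (Set.Ioo (a i) (b i))) := by
    apply isOpen_iInter_of_finite
    intro i
    exact ((EuclideanSpace.proj i).continuous).isOpen_preimage _ isOpen_Ioo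
  have hne : (⋂ i, (fun x : En n => x i) ⁻¹' (Set.Ioo (a i) (b i))).Nonempty := by
    refine ⟨(WithLp.equiv 2 (Fin n → ℝ)).symm (fun i => (a i + b i)/2), ?_⟩
    simp only [Set.mem_iInter, Set.mem_preimage, Set.mem_Ioo]
    intro i
    constructor <;> [skip; skip] <;> · simp only [WithLp.equiv_symm_apply, PiLp.toLp_apply]; linarith [hab i]
  have hsub : (⋂ i, (fun x : En n => x i) ⁻¹' (Set.Ioo (a i) (b i))) ⊆ dyadicCube n k m := by
    intro x hx i
    simp only [Set.mem_iInter, Set.mem_preimage, Set.mem_Ioo] at hx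
    exact ⟨(hx i).1.le, (hx i).2⟩
  calc (0:ℝ≥0∞) < volume (⋂ i, (fun x : En n => x i) ⁻¹' (Set.Ioo (a i) (b i))) :=
        hopen.measure_pos volume hne
    _ ≤ volume (dyadicCube n k m) := measure_mono hsub

/-- nested or disjoint -/
lemma dyadic_nested_or_disjoint {k k' : ℤ} (hkk : k ≤ k') (m m' : Fin n → ℤ) :
    dyadicCube n k' m' ⊆ dyadicCube n k m ∨
      Disjoint (dyadicCube n k' m') (dyadicCube n k m) := by
  set d : ℕ := (k' - k).toNat with hd
  have hdk : (d : ℤ) = k' - k := Int.toNat_of_nonneg (by omega)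
  have h2 : ((2:ℝ)^(-k)) = (2:ℝ)^(d:ℤ) * (2:ℝ)^(-k') := by
    rw [← zpow_add₀ (two_ne_zero)]
    congr 1
    omega
  have h2pos : (0:ℝ) < (2:ℝ)^(-k') := by positivity
  by_cases h : ∀ i, m i * 2^d ≤ m' i ∧ m' i < (m i + 1) * 2^d
  · left
    intro x hx i
    obtain ⟨h1, h2'⟩ := h i
    have hx1 := (hx i).1
    have hx2 := (hx i).2
    have c1 : ((m i : ℝ)) * (2:ℝ)^(-k) ≤ (m' i : ℝ) * (2:ℝ)^(-k') := by
      rw [h2, ← mul_assoc]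
      apply mul_le_mul_of_nonneg_right _ h2pos.le
      have : ((m i * 2^d : ℤ) : ℝ) ≤ ((m' i : ℤ) : ℝ) := by exact_mod_cast h1
      push_cast at this ⊢
      rw [zpow_natCast]; exact this
    have c2 : ((m' i : ℝ) + 1) * (2:ℝ)^(-k') ≤ ((m i : ℝ) + 1) * (2:ℝ)^(-k) := by
      rw [h2, ← mul_assoc]
      apply mul_le_mul_of_nonneg_right _ h2pos.le
      have h3 : (m' i + 1 : ℤ) ≤ (m i + 1) * 2^d := by omega
      have : ((m' i + 1 : ℤ) : ℝ) ≤ (((m i + 1) * 2^d : ℤ) : ℝ) := by exact_mod_cast h3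
      push_cast at this ⊢
      rw [zpow_natCast]; exact this
    exact ⟨le_trans c1 hx1, lt_of_lt_of_le hx2 c2⟩
  · right
    push_neg at h
    obtain ⟨i, hi⟩ := h
    rw [Set.disjoint_left]
    intro x hx' hx
    have hx1 := (hx i).1
    have hx2 := (hx i).2
    have hx1' := (hx' i).1
    have hx2' := (hx' i).2
    by_cases hcase : m i * 2^d ≤ m' i
    · -- then m' i ≥ (m i + 1) * 2^d
      have h3 : (m i + 1) * 2^d ≤ m' i := by
        have := hi hcase
        omega
      have : ((m i : ℝ) + 1) * (2:ℝ)^(-k) ≤ (m' i : ℝ) * (2:ℝ)^(-k') := by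
        rw [h2, ← mul_assoc]
        apply mul_le_mul_of_nonneg_right _ h2pos.le
        have : (((m i + 1) * 2^d : ℤ) : ℝ) ≤ ((m' i : ℤ) : ℝ) := by exact_mod_cast h3
        push_cast at this ⊢
        rw [zpow_natCast]; exact this
      linarith
    · -- m' i < m i * 2^d, so m' i + 1 ≤ m i * 2^d
      push_neg at hcase
      have h3 : (m' i + 1 : ℤ) ≤ m i * 2^d := by omega
      have : ((m' i : ℝ) + 1) * (2:ℝ)^(-k') ≤ (m i : ℝ) * (2:ℝ)^(-k) := by
        rw [h2, ← mul_assoc]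
        apply mul_le_mul_of_nonneg_right _ h2pos.le
        have : ((m' i + 1 : ℤ) : ℝ) ≤ ((m i * 2^d : ℤ) : ℝ) := by exact_mod_cast h3
        push_cast at this ⊢
        rw [zpow_natCast]; exact this
      linarith




open scoped Classical in
/-- `1` if `ofReal t < c`, else `0`. -/
def phiInd (c : ℝ≥0∞) (t : ℝ) : ℝ≥0∞ := if ENNReal.ofReal t < c then 1 else 0

lemma phiInd_mul (f : ℝ → ℝ≥0∞) (c : ℝ≥0∞) (t : ℝ) :
    f t * phiInd c t = Set.indicator {s : ℝ | ENNReal.ofReal s < c} f t := by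
  unfold phiInd
  by_cases h : ENNReal.ofReal t < c <;> simp [h, Set.indicator]

lemma measurableSet_phiSet (c : ℝ≥0∞) : MeasurableSet {s : ℝ | ENNReal.ofReal s < c} :=
  measurableSet_lt ENNReal.measurable_ofReal measurable_const

lemma lintegral_rpow_Ioo (q : ℝ) (hq : -1 < q) (b : ℝ) (hb : 0 ≤ b) :
    ∫⁻ t in Set.Ioo (0:ℝ) b, ENNReal.ofReal (t ^ q) = ENNReal.ofReal (b^(q+1)/(q+1)) := by
  have hint : IntegrableOn (fun t:ℝ => t ^ q) (Set.Ioo 0 b) volume := by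
    have := intervalIntegral.intervalIntegrable_rpow' (a := 0) (b := b) hq
    rw [intervalIntegrable_iff_integrableOn_Ioc_of_le hb] at this
    exact this.mono_set Set.Ioo_subset_Ioc_self
  have hpos : 0 ≤ᵐ[volume.restrict (Set.Ioo 0 b)] fun t:ℝ => t ^ q := by
    filter_upwards [ae_restrict_mem measurableSet_Ioo] with t ht
    exact Real.rpow_nonneg ht.1.le q
  rw [← MeasureTheory.ofReal_integral_eq_lintegral_ofReal hint hpos]
  congr 1
  rw [← MeasureTheory.integral_Ioc_eq_integral_Ioo, ← intervalIntegral.integral_of_le hb,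
    integral_rpow (Or.inl hq)]
  rw [Real.zero_rpow (by linarith : q + 1 ≠ 0)]
  ring

lemma lintegral_phiInd (q : ℝ) (hq : -1 < q) (c : ℝ≥0∞) :
    ∫⁻ t in Set.Ioi (0:ℝ), ENNReal.ofReal (t ^ q) * phiInd c t
      = c ^ (q+1) / ENNReal.ofReal (q+1) := by
  have hq1 : (0:ℝ) < q + 1 := by linarith
  have key : ∫⁻ t in Set.Ioi (0:ℝ), ENNReal.ofReal (t ^ q) * phiInd c t
      = ∫⁻ t in {s : ℝ | ENNReal.ofReal s < c} ∩ Set.Ioi 0, ENNReal.ofReal (t ^ q) := by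
    rw [← Measure.restrict_restrict (measurableSet_phiSet c),
      ← lintegral_indicator (measurableSet_phiSet c)]
    congr 1
    ext t
    exact phiInd_mul (fun s => ENNReal.ofReal (s ^ q)) c t
  rw [key]
  rcases eq_or_ne c ⊤ with rfl | hc
  · have huniv : {s : ℝ | ENNReal.ofReal s < (⊤:ℝ≥0∞)} ∩ Set.Ioi 0 = Set.Ioi (0:ℝ) := by
      ext t; simp [ENNReal.ofReal_lt_top]
    rw [huniv]
    have hge : ∀ N : ℕ, ENNReal.ofReal ((N:ℝ)^(q+1)/(q+1))
        ≤ ∫⁻ t in Set.Ioi (0:ℝ), ENNReal.ofReal (t ^ q) := by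
      intro N
      rw [← lintegral_rpow_Ioo q hq N N.cast_nonneg]
      exact lintegral_mono_set Set.Ioo_subset_Ioi_self
    have htop : ∫⁻ t in Set.Ioi (0:ℝ), ENNReal.ofReal (t ^ q) = ⊤ := by
      by_contra hne
      have hB : ∀ N : ℕ, (N:ℝ)^(q+1)/(q+1) ≤ (∫⁻ t in Set.Ioi (0:ℝ), ENNReal.ofReal (t ^ q)).toReal := by
        intro N
        exact (ENNReal.ofReal_le_iff_le_toReal hne).1 (hge N)
      set B := (∫⁻ t in Set.Ioi (0:ℝ), ENNReal.ofReal (t ^ q)).toReal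
      have htend : Tendsto (fun N : ℕ => (N:ℝ)^(q+1)) atTop atTop :=
        (tendsto_rpow_atTop hq1).comp tendsto_natCast_atTop_atTop
      obtain ⟨N, hN⟩ := (htend.eventually_ge_atTop ((q+1)*(B+1))).exists
      have := hB N
      have hgt : B + 1 ≤ (N:ℝ)^(q+1)/(q+1) := by
        rw [le_div_iff₀ hq1]
        linarith
      linarith
    rw [htop, ENNReal.top_rpow_of_pos hq1]
    rw [ENNReal.top_div]
    simp [ENNReal.ofReal_ne_top]
  · have hset : {s : ℝ | ENNReal.ofReal s < c} ∩ Set.Ioi 0 = Set.Ioo 0 c.toReal := by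
      ext t
      simp only [Set.mem_inter_iff, Set.mem_setOf_eq, Set.mem_Ioi, Set.mem_Ioo]
      constructor
      · rintro ⟨h1, h2⟩; exact ⟨h2, (ENNReal.ofReal_lt_iff_lt_toReal h2.le hc).1 h1⟩
      · rintro ⟨h2, h1⟩; exact ⟨(ENNReal.ofReal_lt_iff_lt_toReal h2.le hc).2 h1, h2⟩
    rw [hset, lintegral_rpow_Ioo q hq c.toReal ENNReal.toReal_nonneg,
      ENNReal.ofReal_div_of_pos hq1,
      ← ENNReal.ofReal_rpow_of_nonneg ENNReal.toReal_nonneg hq1.le,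
      ENNReal.ofReal_toReal hc]


variable {n : ℕ}

/-- Index of a dyadic cube. -/
abbrev Idx (n : ℕ) := ℤ × (Fin n → ℤ)

/-- The dyadic cube with index `i`. -/
def cb (i : Idx n) : Set (En n) := dyadicCube n i.1 i.2

lemma measurableSet_cb (i : Idx n) : MeasurableSet (cb i) :=
  measurableSet_dyadicCube _ _

lemma cb_nested_or_disjoint {i j : Idx n} (h : i.1 ≤ j.1) :
    cb j ⊆ cb i ∨ Disjoint (cb j) (cb i) :=
  dyadic_nested_or_disjoint h _ _

lemma mul_le_of_lt_inv_mul {L b c : ℝ≥0∞} (hb : b ≠ ⊤) (h : L < b⁻¹ * c) : L * b ≤ c := by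
  rcases eq_or_ne b 0 with rfl | hb0
  · simp
  · calc L * b ≤ (b⁻¹ * c) * b := mul_le_mul_left h.le b
      _ = c := by rw [mul_comm b⁻¹ c, mul_assoc, ENNReal.inv_mul_cancel hb0 hb, mul_one]

section Stopping

variable (μ : Measure (En n)) (g : En n → ℝ≥0∞) (L : ℝ≥0∞)

lemma weak_finset (hfin : ∀ i : Idx n, μ (cb i) ≠ ⊤) (F : Finset (Idx n))
    (hF : ∀ i ∈ F, L < (μ (cb i))⁻¹ * ∫⁻ x in cb i, g x ∂μ) :
    L * μ (⋃ i ∈ F, cb (n := n) i) ≤ ∫⁻ x in ⋃ i ∈ F, cb (n := n) i, g x ∂μ := by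
  classical
  induction F using Finset.strongInduction with
  | _ F IH =>
    rcases F.eq_empty_or_nonempty with rfl | hne
    · simp
    obtain ⟨i₀, hi₀F, hi₀min⟩ := F.exists_min_image (fun i => i.1) hne
    set F' := F.filter (fun j => ¬ cb (n := n) j ⊆ cb i₀) with hF'def
    have hF'sub : F' ⊆ F := Finset.filter_subset _ _
    have hF'ss : F' ⊂ F := by
      refine Finset.ssubset_iff_of_subset hF'sub |>.2 ⟨i₀, hi₀F, ?_⟩
      simp [hF'def]
    have hdisj : Disjoint (cb (n := n) i₀) (⋃ j ∈ F', cb (n := n) j) := by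
      rw [Set.disjoint_iUnion₂_right]
      intro j hj
      rcases cb_nested_or_disjoint (hi₀min j (hF'sub hj)) with hsub | hd
      · exact absurd hsub (Finset.mem_filter.1 hj).2
      · exact hd.symm
    have hunion : (⋃ i ∈ F, cb (n := n) i) = cb i₀ ∪ ⋃ j ∈ F', cb (n := n) j := by
      ext x
      simp only [Set.mem_iUnion, Set.mem_union, exists_prop]
      constructor
      · rintro ⟨j, hj, hx⟩
        by_cases hsub : cb (n := n) j ⊆ cb i₀
        · exact Or.inl (hsub hx)
        · exact Or.inr ⟨j, Finset.mem_filter.2 ⟨hj, hsub⟩, hx⟩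
      · rintro (hx | ⟨j, hj, hx⟩)
        · exact ⟨i₀, hi₀F, hx⟩
        · exact ⟨j, hF'sub hj, hx⟩
    have hmeasU' : MeasurableSet (⋃ j ∈ F', cb (n := n) j) :=
      F'.measurableSet_biUnion fun j _ => measurableSet_cb j
    rw [hunion]
    calc L * μ (cb i₀ ∪ ⋃ j ∈ F', cb (n := n) j)
        ≤ L * (μ (cb i₀) + μ (⋃ j ∈ F', cb (n := n) j)) :=
          mul_le_mul_right (measure_union_le _ _) L
      _ = L * μ (cb i₀) + L * μ (⋃ j ∈ F', cb (n := n) j) := by rw [mul_add]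
      _ ≤ (∫⁻ x in cb i₀, g x ∂μ) + ∫⁻ x in ⋃ j ∈ F', cb (n := n) j, g x ∂μ := by
          gcongr
          · exact mul_le_of_lt_inv_mul (hfin i₀) (hF i₀ hi₀F)
          · exact IH F' hF'ss fun i hi => hF i (hF'sub hi)
      _ = ∫⁻ x in cb i₀ ∪ ⋃ j ∈ F', cb (n := n) j, g x ∂μ :=
          (lintegral_union hmeasU' hdisj).symm

lemma carleson_finset (a' : Idx n → ℝ≥0∞) (C : ℝ≥0∞)
    (hC : ∀ R : Idx n, (∑' Q : {Q : Idx n // cb (n := n) Q ⊆ cb R}, a' Q) ≤ C * μ (cb R))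
    (F : Finset (Idx n)) :
    ∑ i ∈ F, a' i ≤ C * μ (⋃ i ∈ F, cb (n := n) i) := by
  classical
  induction F using Finset.strongInduction with
  | _ F IH =>
    rcases F.eq_empty_or_nonempty with rfl | hne
    · simp
    obtain ⟨i₀, hi₀F, hi₀min⟩ := F.exists_min_image (fun i => i.1) hne
    set S : Set (Idx n) := {Q | cb (n := n) Q ⊆ cb i₀} with hSdef
    set F' := F.filter (fun j => ¬ cb (n := n) j ⊆ cb i₀) with hF'def
    have hF'sub : F' ⊆ F := Finset.filter_subset _ _
    have hF'ss : F' ⊂ F := by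
      refine Finset.ssubset_iff_of_subset hF'sub |>.2 ⟨i₀, hi₀F, ?_⟩
      simp [hF'def]
    have hdisj : Disjoint (cb (n := n) i₀) (⋃ j ∈ F', cb (n := n) j) := by
      rw [Set.disjoint_iUnion₂_right]
      intro j hj
      rcases cb_nested_or_disjoint (hi₀min j (hF'sub hj)) with hsub | hd
      · exact absurd hsub (Finset.mem_filter.1 hj).2
      · exact hd.symm
    have hunion : (⋃ i ∈ F, cb (n := n) i) = cb i₀ ∪ ⋃ j ∈ F', cb (n := n) j := by
      ext x
      simp only [Set.mem_iUnion, Set.mem_union, exists_prop]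
      constructor
      · rintro ⟨j, hj, hx⟩
        by_cases hsub : cb (n := n) j ⊆ cb i₀
        · exact Or.inl (hsub hx)
        · exact Or.inr ⟨j, Finset.mem_filter.2 ⟨hj, hsub⟩, hx⟩
      · rintro (hx | ⟨j, hj, hx⟩)
        · exact ⟨i₀, hi₀F, hx⟩
        · exact ⟨j, hF'sub hj, hx⟩
    have hmeasU' : MeasurableSet (⋃ j ∈ F', cb (n := n) j) :=
      F'.measurableSet_biUnion fun j _ => measurableSet_cb j
    have hsplit : ∑ i ∈ F, a' i
        = ∑ i ∈ F.filter (fun j => cb (n := n) j ⊆ cb i₀), a' i + ∑ i ∈ F', a' i := by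
      rw [hF'def, Finset.sum_filter_add_sum_filter_not]
    have hpart1 : ∑ i ∈ F.filter (fun j => cb (n := n) j ⊆ cb i₀), a' i ≤ C * μ (cb i₀) := by
      calc ∑ i ∈ F.filter (fun j => cb (n := n) j ⊆ cb i₀), a' i
          = ∑ i ∈ F.filter (fun j => cb (n := n) j ⊆ cb i₀), S.indicator a' i := by
            refine Finset.sum_congr rfl fun i hi => ?_
            have hmem : i ∈ S := (Finset.mem_filter.1 hi).2
            rw [Set.indicator_of_mem hmem a']
        _ ≤ ∑' i : Idx n, S.indicator a' i := ENNReal.sum_le_tsum _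
        _ = ∑' Q : {Q : Idx n // cb (n := n) Q ⊆ cb i₀}, a' Q := (tsum_subtype S a').symm
        _ ≤ C * μ (cb i₀) := hC i₀
    calc ∑ i ∈ F, a' i ≤ C * μ (cb i₀) + C * μ (⋃ j ∈ F', cb (n := n) j) := by
          rw [hsplit]; exact add_le_add hpart1 (IH F' hF'ss)
      _ = C * (μ (cb i₀) + μ (⋃ j ∈ F', cb (n := n) j)) := by rw [mul_add]
      _ = C * μ (cb i₀ ∪ ⋃ j ∈ F', cb (n := n) j) := by
          rw [measure_union hdisj hmeasU']
      _ = C * μ (⋃ i ∈ F, cb (n := n) i) := by rw [hunion]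

lemma weak_countable (hfin : ∀ i : Idx n, μ (cb i) ≠ ⊤) :
    L * μ (⋃ (i : Idx n) (_ : L < (μ (cb i))⁻¹ * ∫⁻ x in cb i, g x ∂μ), cb (n := n) i)
      ≤ ∫⁻ x in ⋃ (i : Idx n) (_ : L < (μ (cb i))⁻¹ * ∫⁻ x in cb i, g x ∂μ),
          cb (n := n) i, g x ∂μ := by
  classical
  set S : Set (Idx n) := {i | L < (μ (cb i))⁻¹ * ∫⁻ x in cb i, g x ∂μ} with hSdef
  have hU : (⋃ (i : Idx n) (_ : L < (μ (cb i))⁻¹ * ∫⁻ x in cb i, g x ∂μ), cb (n := n) i)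
      = ⋃ (j : S), cb (n := n) (j : Idx n) := by
    rw [Set.iUnion_subtype]
    rfl
  rw [hU]
  rcases isEmpty_or_nonempty S with hS | hS
  · simp
  obtain ⟨e, he⟩ := exists_surjective_nat S
  have hU2 : (⋃ (j : S), cb (n := n) (j : Idx n)) = ⋃ N, Set.accumulate (fun k => cb (n := n) ((e k) : Idx n)) N := by
    rw [Set.iUnion_accumulate]
    exact (Set.iUnion_congr_of_surjective e he fun k => rfl).symm
  have hmono : Monotone (Set.accumulate (fun k => cb (n := n) ((e k) : Idx n))) :=
    Set.monotone_accumulate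
  have hmeas : μ (⋃ (j : S), cb (n := n) (j : Idx n))
      = ⨆ N, μ (Set.accumulate (fun k => cb (n := n) ((e k) : Idx n)) N) := by
    rw [hU2]
    exact hmono.directed_le.measure_iUnion
  rw [hmeas, ENNReal.mul_iSup]
  refine iSup_le fun N => ?_
  have hacc : Set.accumulate (fun k => cb (n := n) ((e k) : Idx n)) N
      = ⋃ i ∈ (Finset.range (N+1)).image (fun k => ((e k) : Idx n)), cb (n := n) i := by
    ext x
    simp only [Set.mem_accumulate, Set.mem_iUnion, Finset.mem_image, Finset.mem_range,
      Nat.lt_succ_iff, exists_prop]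
    constructor
    · rintro ⟨k, hk, hx⟩; exact ⟨(e k : Idx n), ⟨k, hk, rfl⟩, hx⟩
    · rintro ⟨i, ⟨k, hk, rfl⟩, hx⟩; exact ⟨k, hk, hx⟩
  have hFgood : ∀ i ∈ (Finset.range (N+1)).image (fun k => ((e k) : Idx n)),
      L < (μ (cb i))⁻¹ * ∫⁻ x in cb (n := n) i, g x ∂μ := by
    intro i hi
    obtain ⟨k, _, rfl⟩ := Finset.mem_image.1 hi
    exact (e k).2
  calc L * μ (Set.accumulate (fun k => cb (n := n) ((e k) : Idx n)) N)
      = L * μ (⋃ i ∈ (Finset.range (N+1)).image (fun k => ((e k) : Idx n)), cb (n := n) i) := by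
        rw [hacc]
    _ ≤ ∫⁻ x in ⋃ i ∈ (Finset.range (N+1)).image (fun k => ((e k) : Idx n)), cb (n := n) i,
          g x ∂μ := weak_finset μ g L hfin _ hFgood
    _ ≤ ∫⁻ x in ⋃ (j : S), cb (n := n) (j : Idx n), g x ∂μ := by
        refine lintegral_mono_set ?_
        rw [← hacc, hU2]
        exact Set.subset_iUnion _ N

end Stopping

section Maximal

variable (μ : Measure (En n)) (g : En n → ℝ≥0∞)

/-- The weighted dyadic maximal function. -/
def Mdy : En n → ℝ≥0∞ := fun x =>
  ⨆ i : Idx n, (cb (n := n) i).indicator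
    (fun _ => (μ (cb (n := n) i))⁻¹ * ∫⁻ y in cb (n := n) i, g y ∂μ) x

lemma measurable_Mdy : Measurable (Mdy μ g) :=
  Measurable.iSup fun i => measurable_const.indicator (measurableSet_cb i)

lemma Mdy_ge {i : Idx n} {x : En n} (hx : x ∈ cb (n := n) i) :
    (μ (cb (n := n) i))⁻¹ * ∫⁻ y in cb (n := n) i, g y ∂μ ≤ Mdy μ g x := by
  refine le_trans ?_ (le_iSup _ i)
  rw [Set.indicator_of_mem hx]

lemma Mdy_le {x : En n} {b : ℝ≥0∞}
    (h : ∀ i : Idx n, x ∈ cb (n := n) i →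
      (μ (cb (n := n) i))⁻¹ * ∫⁻ y in cb (n := n) i, g y ∂μ ≤ b) :
    Mdy μ g x ≤ b := by
  refine iSup_le fun i => ?_
  by_cases hx : x ∈ cb (n := n) i
  · rw [Set.indicator_of_mem hx]; exact h i hx
  · rw [Set.indicator_of_notMem hx]; exact zero_le

lemma lt_Mdy_iff {L : ℝ≥0∞} (hL : 0 < L) (x : En n) :
    L < Mdy μ g x ↔ ∃ i : Idx n, x ∈ cb (n := n) i ∧
      L < (μ (cb (n := n) i))⁻¹ * ∫⁻ y in cb (n := n) i, g y ∂μ := by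
  rw [Mdy, lt_iSup_iff]
  constructor
  · rintro ⟨i, hi⟩
    by_cases hx : x ∈ cb (n := n) i
    · rw [Set.indicator_of_mem hx] at hi
      exact ⟨i, hx, hi⟩
    · rw [Set.indicator_of_notMem hx] at hi
      exact absurd hi (by simp [not_lt, hL.le] at *)
  · rintro ⟨i, hx, hi⟩
    exact ⟨i, by rwa [Set.indicator_of_mem hx]⟩

lemma Es_eq {L : ℝ≥0∞} (hL : 0 < L) :
    {x | L < Mdy μ g x}
      = ⋃ (i : Idx n) (_ : L < (μ (cb (n := n) i))⁻¹ * ∫⁻ y in cb (n := n) i, g y ∂μ),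
          cb (n := n) i := by
  ext x
  rw [Set.mem_setOf_eq, lt_Mdy_iff μ g hL x]
  simp only [Set.mem_iUnion, exists_prop]
  tauto

lemma weak_E (hfin : ∀ i : Idx n, μ (cb (n := n) i) ≠ ⊤) {L : ℝ≥0∞} (hL : 0 < L) :
    L * μ {x | L < Mdy μ g x} ≤ ∫⁻ x in {x | L < Mdy μ g x}, g x ∂μ := by
  rw [Es_eq μ g hL]
  exact weak_countable μ g L hfin

end Maximal

section LayerCake

variable (μ : Measure (En n))

lemma measurable_phi_t (c : ℝ≥0∞) : Measurable (phiInd c) := by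
  have : phiInd c = {s : ℝ | ENNReal.ofReal s < c}.indicator (fun _ => 1) := by
    ext t
    unfold phiInd
    by_cases h : ENNReal.ofReal t < c <;> simp [h, Set.indicator]
  rw [this]
  exact measurable_const.indicator (measurableSet_phiSet c)

lemma measurable_phi_x {G : En n → ℝ≥0∞} (hG : Measurable G) (t : ℝ) :
    Measurable fun x => phiInd (G x) t := by
  have : (fun x => phiInd (G x) t)
      = {x : En n | ENNReal.ofReal t < G x}.indicator (fun _ => 1) := by
    ext x
    unfold phiInd
    by_cases h : ENNReal.ofReal t < G x <;> simp [h, Set.indicator]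
  rw [this]
  exact measurable_const.indicator (measurableSet_lt measurable_const hG)

lemma lintegral_phi_x {G : En n → ℝ≥0∞} (hG : Measurable G) (t : ℝ) :
    ∫⁻ x, phiInd (G x) t ∂μ = μ {x | ENNReal.ofReal t < G x} := by
  have : (fun x => phiInd (G x) t)
      = {x : En n | ENNReal.ofReal t < G x}.indicator (fun _ => 1) := by
    ext x
    unfold phiInd
    by_cases h : ENNReal.ofReal t < G x <;> simp [h, Set.indicator]
  calc ∫⁻ x, phiInd (G x) t ∂μ
      = ∫⁻ x, {x : En n | ENNReal.ofReal t < G x}.indicator (fun _ => 1) x ∂μ :=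
        lintegral_congr fun x => congrFun this x
    _ = μ {x | ENNReal.ofReal t < G x} :=
        lintegral_indicator_one (measurableSet_lt measurable_const hG)

lemma swap_core [SFinite μ] {G : En n → ℝ≥0∞} (hG : Measurable G)
    {α : ℝ → ℝ≥0∞} (hα : Measurable α) {β : En n → ℝ≥0∞} (hβ : Measurable β) :
    ∫⁻ x, ∫⁻ t in Set.Ioi (0:ℝ), β x * (α t * phiInd (G x) t) ∂volume ∂μ
      = ∫⁻ t in Set.Ioi (0:ℝ), ∫⁻ x, β x * (α t * phiInd (G x) t) ∂μ ∂volume := by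
  refine lintegral_lintegral_swap ?_
  have hset : MeasurableSet {q : En n × ℝ | ENNReal.ofReal q.2 < G q.1} :=
    measurableSet_lt (ENNReal.measurable_ofReal.comp measurable_snd) (hG.comp measurable_fst)
  have hphi : Measurable fun q : En n × ℝ => phiInd (G q.1) q.2 := by
    have : (fun q : En n × ℝ => phiInd (G q.1) q.2)
        = {q : En n × ℝ | ENNReal.ofReal q.2 < G q.1}.indicator (fun _ => 1) := by
      ext q
      unfold phiInd
      by_cases h : ENNReal.ofReal q.2 < G q.1 <;> simp [h, Set.indicator]
    rw [this]
    exact measurable_const.indicator hset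
  exact ((hβ.comp measurable_fst).mul ((hα.comp measurable_snd).mul hphi)).aemeasurable

lemma pow_eq_lintegral_phi {q : ℝ} (hq : -1 < q) (c : ℝ≥0∞) :
    c ^ (q+1) = ENNReal.ofReal (q+1)
      * ∫⁻ t in Set.Ioi (0:ℝ), ENNReal.ofReal (t ^ q) * phiInd c t := by
  rw [lintegral_phiInd q hq c, ENNReal.mul_div_cancel]
  · exact (ENNReal.ofReal_pos.2 (by linarith)).ne'
  · exact ENNReal.ofReal_ne_top

lemma layercake [SFinite μ] {F : En n → ℝ≥0∞} (hF : Measurable F) {q : ℝ} (hq : -1 < q) :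
    ∫⁻ x, F x ^ (q+1) ∂μ
      = ENNReal.ofReal (q+1) * ∫⁻ t in Set.Ioi (0:ℝ),
          ENNReal.ofReal (t ^ q) * μ {x | ENNReal.ofReal t < F x} ∂volume := by
  have h1 : ∫⁻ x, F x ^ (q+1) ∂μ
      = ∫⁻ x, ENNReal.ofReal (q+1)
          * ∫⁻ t in Set.Ioi (0:ℝ), ENNReal.ofReal (t ^ q) * phiInd (F x) t ∂volume ∂μ := by
    congr 1
    ext x
    exact pow_eq_lintegral_phi hq (F x)
  rw [h1, lintegral_const_mul' _ _ ENNReal.ofReal_ne_top]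
  congr 1
  have h2 : ∀ x, ∫⁻ t in Set.Ioi (0:ℝ), ENNReal.ofReal (t ^ q) * phiInd (F x) t ∂volume
      = ∫⁻ t in Set.Ioi (0:ℝ), (1:ℝ≥0∞) * (ENNReal.ofReal (t ^ q) * phiInd (F x) t) ∂volume := by
    intro x
    simp
  calc ∫⁻ x, ∫⁻ t in Set.Ioi (0:ℝ), ENNReal.ofReal (t ^ q) * phiInd (F x) t ∂volume ∂μ
      = ∫⁻ x, ∫⁻ t in Set.Ioi (0:ℝ),
          (1:ℝ≥0∞) * (ENNReal.ofReal (t ^ q) * phiInd (F x) t) ∂volume ∂μ := by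
        simp only [one_mul]
    _ = ∫⁻ t in Set.Ioi (0:ℝ), ∫⁻ x,
          (1:ℝ≥0∞) * (ENNReal.ofReal (t ^ q) * phiInd (F x) t) ∂μ ∂volume :=
        swap_core μ hF (by measurability) measurable_const
    _ = ∫⁻ t in Set.Ioi (0:ℝ), ENNReal.ofReal (t ^ q) * μ {x | ENNReal.ofReal t < F x} ∂volume := by
        refine lintegral_congr fun t => ?_
        simp only [one_mul]
        rw [lintegral_const_mul' _ _ ENNReal.ofReal_ne_top, lintegral_phi_x μ hF t]

end LayerCake

theorem main (μ : Measure (En n)) [SFinite μ]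
    (hfin : ∀ i : Idx n, μ (cb (n := n) i) ≠ ⊤)
    (a' : Idx n → ℝ≥0∞) (ha' : ∀ i, a' i ≠ ⊤) (A' : ℝ≥0∞) (hA' : A' ≠ ⊤)
    (hC : ∀ R : Idx n,
      (∑' Q : {Q : Idx n // cb (n := n) Q ⊆ cb R}, a' Q) ≤ A' * μ (cb (n := n) R))
    (p : ℝ) (hp : 1 < p) (g : En n → ℝ≥0∞) (hg : Measurable g) (hgne : ∀ x, g x ≠ ⊤)
    (hIp : (∫⁻ x, g x ^ p ∂μ) ≠ ⊤) :
    (∑' Q : Idx n, a' Q * ((μ (cb (n := n) Q))⁻¹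
        * ∫⁻ x in cb (n := n) Q, g x ∂μ) ^ p) ^ (1/p)
      ≤ A' ^ (1/p) * ENNReal.ofReal (p/(p-1))
        * (∫⁻ x, g x ^ p ∂μ) ^ (1/p) := by
  classical
  have hp0 : (0:ℝ) < p := by linarith
  have hp1 : (0:ℝ) < p - 1 := by linarith
  have hp1' : (-1:ℝ) < p - 1 := by linarith
  have hp2' : (-1:ℝ) < p - 2 := by linarith
  set r : ℝ := p / (p - 1) with hrdef
  have hr0 : 0 < r := div_pos hp0 hp1
  have hpq : Real.HolderConjugate p r := Real.HolderConjugate.conjExponent hp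
  have hmulr : (p - 1) * r = p := by
    rw [hrdef]; field_simp
  set cval : Idx n → ℝ≥0∞ :=
    fun i => (μ (cb (n := n) i))⁻¹ * ∫⁻ x in cb (n := n) i, g x ∂μ with hcvaldef
  set M : En n → ℝ≥0∞ := Mdy μ g with hMdef
  have hMm : Measurable M := measurable_Mdy μ g
  set T : ℝ≥0∞ := ∫⁻ x, M x ^ p ∂μ with hTdef
  set Ip : ℝ≥0∞ := ∫⁻ x, g x ^ p ∂μ with hIpdef
  -- layer cake for T
  have hTlc : T = ENNReal.ofReal p * ∫⁻ t in Set.Ioi (0:ℝ),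
      ENNReal.ofReal (t ^ (p-1)) * μ {x | ENNReal.ofReal t < M x} ∂volume := by
    have := layercake μ hMm hp1'
    rw [sub_add_cancel] at this
    exact this
  have hrm : ∀ q : ℝ, Measurable fun t : ℝ => ENNReal.ofReal (t ^ q) := by
    intro q; measurability
  -- bridge lemma used twice
  have bridge : ∀ (G : En n → ℝ≥0∞), Measurable G →
      (∫⁻ t in Set.Ioi (0:ℝ),
          ENNReal.ofReal (t ^ (p-2)) * ∫⁻ x, g x * phiInd (G x) t ∂μ ∂volume)
        = ∫⁻ x, g x * (G x ^ (p-1) / ENNReal.ofReal (p-1)) ∂μ := by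
    intro G hG
    calc ∫⁻ t in Set.Ioi (0:ℝ),
          ENNReal.ofReal (t ^ (p-2)) * ∫⁻ x, g x * phiInd (G x) t ∂μ ∂volume
        = ∫⁻ t in Set.Ioi (0:ℝ), ∫⁻ x,
            g x * (ENNReal.ofReal (t ^ (p-2)) * phiInd (G x) t) ∂μ ∂volume := by
          refine lintegral_congr fun t => ?_
          rw [← lintegral_const_mul' _ _ ENNReal.ofReal_ne_top]
          exact lintegral_congr fun x => mul_left_comm _ _ _
      _ = ∫⁻ x, ∫⁻ t in Set.Ioi (0:ℝ),
            g x * (ENNReal.ofReal (t ^ (p-2)) * phiInd (G x) t) ∂volume ∂μ :=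
          (swap_core μ hG (hrm (p-2)) hg).symm
      _ = ∫⁻ x, g x * (G x ^ (p-1) / ENNReal.ofReal (p-1)) ∂μ := by
          refine lintegral_congr fun x => ?_
          rw [lintegral_const_mul' _ _ (hgne x), lintegral_phiInd (p-2) hp2' (G x),
            show p - 2 + 1 = p - 1 by ring]
  -- Carleson level bound
  have hA_level : ∀ t : ℝ, (∑' i : Idx n, a' i * phiInd (cval i) t)
      ≤ A' * μ {x | ENNReal.ofReal t < M x} := by
    intro t
    rw [ENNReal.tsum_eq_iSup_sum]
    refine iSup_le fun F => ?_
    have h1 : ∑ i ∈ F, a' i * phiInd (cval i) t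
        = ∑ i ∈ F.filter (fun i => ENNReal.ofReal t < cval i), a' i := by
      rw [Finset.sum_filter]
      refine Finset.sum_congr rfl fun i _ => ?_
      unfold phiInd
      split_ifs with h
      · rw [mul_one]
      · rw [mul_zero]
    rw [h1]
    calc ∑ i ∈ F.filter (fun i => ENNReal.ofReal t < cval i), a' i
        ≤ A' * μ (⋃ i ∈ F.filter (fun i => ENNReal.ofReal t < cval i), cb (n := n) i) :=
          carleson_finset μ a' A' hC _
      _ ≤ A' * μ {x | ENNReal.ofReal t < M x} := by
          refine mul_le_mul_right (measure_mono ?_) A'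
          refine Set.iUnion₂_subset fun i hi x hx => ?_
          exact lt_of_lt_of_le ((Finset.mem_filter.1 hi).2) (Mdy_ge μ g hx)
  -- Step A : S ≤ A' * T
  have hS : (∑' Q : Idx n, a' Q * cval Q ^ p) ≤ A' * T := by
    have e1 : ∀ Q : Idx n, a' Q * cval Q ^ p
        = ENNReal.ofReal p * ∫⁻ t in Set.Ioi (0:ℝ),
            a' Q * (ENNReal.ofReal (t ^ (p-1)) * phiInd (cval Q) t) ∂volume := by
      intro Q
      rw [show cval Q ^ p = cval Q ^ ((p-1)+1) by rw [sub_add_cancel],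
        pow_eq_lintegral_phi hp1' (cval Q), sub_add_cancel,
        lintegral_const_mul' (a' Q) _ (ha' Q), ← mul_assoc, mul_comm (a' Q) (ENNReal.ofReal p),
        mul_assoc]
    calc ∑' Q : Idx n, a' Q * cval Q ^ p
        = ENNReal.ofReal p * ∑' Q : Idx n, ∫⁻ t in Set.Ioi (0:ℝ),
            a' Q * (ENNReal.ofReal (t ^ (p-1)) * phiInd (cval Q) t) ∂volume := by
          rw [← ENNReal.tsum_mul_left]
          exact tsum_congr e1
      _ = ENNReal.ofReal p * ∫⁻ t in Set.Ioi (0:ℝ),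
            ∑' Q : Idx n, a' Q * (ENNReal.ofReal (t ^ (p-1)) * phiInd (cval Q) t) ∂volume := by
          congr 1
          refine (lintegral_tsum fun Q => ?_).symm
          exact (measurable_const.mul ((hrm (p-1)).mul (measurable_phi_t (cval Q)))).aemeasurable
      _ ≤ ENNReal.ofReal p * ∫⁻ t in Set.Ioi (0:ℝ),
            ENNReal.ofReal (t ^ (p-1)) * (A' * μ {x | ENNReal.ofReal t < M x}) ∂volume := by
          refine mul_le_mul_right (lintegral_mono fun t => ?_) _
          have : ∑' Q : Idx n, a' Q * (ENNReal.ofReal (t ^ (p-1)) * phiInd (cval Q) t)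
              = ENNReal.ofReal (t ^ (p-1)) * ∑' Q : Idx n, a' Q * phiInd (cval Q) t := by
            rw [← ENNReal.tsum_mul_left]
            exact tsum_congr fun Q => mul_left_comm _ _ _
          rw [this]
          exact mul_le_mul_right (hA_level t) _
      _ = A' * T := by
          rw [hTlc]
          have : ∫⁻ t in Set.Ioi (0:ℝ),
              ENNReal.ofReal (t ^ (p-1)) * (A' * μ {x | ENNReal.ofReal t < M x}) ∂volume
              = A' * ∫⁻ t in Set.Ioi (0:ℝ),
                  ENNReal.ofReal (t ^ (p-1)) * μ {x | ENNReal.ofReal t < M x} ∂volume := by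
            rw [← lintegral_const_mul' A' _ hA']
            exact lintegral_congr fun t => mul_left_comm _ _ _
          rw [this, mul_left_comm]
  -- Step C : T ≤ r' * Ip^{1/p} * T^{1/r}
  have hH : (∫⁻ x, g x * M x ^ (p-1) ∂μ) ≤ Ip ^ (1/p) * T ^ (1/r) := by
    have h := ENNReal.lintegral_mul_le_Lp_mul_Lq μ hpq hg.aemeasurable
      ((hMm.pow_const (p-1)).aemeasurable)
    simp only [Pi.mul_apply] at h
    refine h.trans (le_of_eq ?_)
    congr 1
    rw [hTdef]
    congr 1
    refine lintegral_congr fun x => ?_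
    rw [← ENNReal.rpow_mul, hmulr]
  have hTC : T ≤ ENNReal.ofReal r * (Ip ^ (1/p) * T ^ (1/r)) := by
    calc T = ENNReal.ofReal p * ∫⁻ t in Set.Ioi (0:ℝ),
          ENNReal.ofReal (t ^ (p-1)) * μ {x | ENNReal.ofReal t < M x} ∂volume := hTlc
      _ ≤ ENNReal.ofReal p * ∫⁻ t in Set.Ioi (0:ℝ),
          ENNReal.ofReal (t ^ (p-2)) * ∫⁻ x, g x * phiInd (M x) t ∂μ ∂volume := by
          refine mul_le_mul_right (lintegral_mono_ae ?_) _
          filter_upwards [ae_restrict_mem measurableSet_Ioi] with t ht'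
          have ht : 0 < t := ht'
          rw [show t ^ (p-1) = t ^ (p-2) * t by
              rw [show p - 1 = (p-2) + 1 by ring, Real.rpow_add_one ht.ne' (p-2)],
            ENNReal.ofReal_mul (Real.rpow_nonneg ht.le _), mul_assoc]
          refine mul_le_mul_right ?_ _
          refine (weak_E μ g hfin (ENNReal.ofReal_pos.2 ht)).trans (le_of_eq ?_)
          rw [← lintegral_indicator (measurableSet_lt measurable_const hMm)]
          refine lintegral_congr fun x => ?_
          unfold phiInd
          by_cases h : ENNReal.ofReal t < M x
          · rw [if_pos h, mul_one]
            exact Set.indicator_of_mem (show x ∈ {a | ENNReal.ofReal t < M a} from h) g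
          · rw [if_neg h, mul_zero]
            exact Set.indicator_of_notMem
              (show x ∉ {a | ENNReal.ofReal t < M a} from h) g
      _ = ENNReal.ofReal p * ∫⁻ x, g x * (M x ^ (p-1) / ENNReal.ofReal (p-1)) ∂μ := by
          rw [bridge M hMm]
      _ = ENNReal.ofReal p * ((∫⁻ x, g x * M x ^ (p-1) ∂μ) * (ENNReal.ofReal (p-1))⁻¹) := by
          congr 1
          rw [← lintegral_mul_const' _ _ (ENNReal.inv_ne_top.2 (ENNReal.ofReal_pos.2 hp1).ne')]
          exact lintegral_congr fun x => by rw [div_eq_mul_inv, mul_assoc]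
      _ ≤ ENNReal.ofReal p * ((Ip ^ (1/p) * T ^ (1/r)) * (ENNReal.ofReal (p-1))⁻¹) := by
          gcongr
      _ = ENNReal.ofReal r * (Ip ^ (1/p) * T ^ (1/r)) := by
          rw [hrdef, ENNReal.ofReal_div_of_pos hp1, ENNReal.div_eq_inv_mul]
          ring
  -- Step D : T ≠ ⊤
  have hpt : ∀ t : ℝ, 0 < t → ∀ x, g x ≤ ENNReal.ofReal (t/2) + g x * phiInd (2 * g x) t := by
    intro t ht x
    unfold phiInd
    by_cases h : ENNReal.ofReal t < 2 * g x
    · rw [if_pos h, mul_one]; exact le_add_self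
    · rw [if_neg h, mul_zero, add_zero]
      push_neg at h
      have e2 : ENNReal.ofReal t = 2 * ENNReal.ofReal (t/2) := by
        rw [show (2:ℝ≥0∞) = ENNReal.ofReal 2 by simp, ← ENNReal.ofReal_mul (by norm_num)]
        congr 1; ring
      rw [e2] at h
      exact (ENNReal.mul_le_mul_iff_right two_ne_zero ENNReal.ofNat_ne_top).1 h
  have hcval_t : ∀ t : ℝ, 0 < t → ∀ i : Idx n, cval i
      ≤ ENNReal.ofReal (t/2)
        + (μ (cb (n := n) i))⁻¹ * ∫⁻ x in cb (n := n) i, g x * phiInd (2 * g x) t ∂μ := by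
    intro t ht i
    rcases eq_or_ne (μ (cb (n := n) i)) 0 with h0 | h0
    · have hr : μ.restrict (cb (n := n) i) = 0 := Measure.restrict_eq_zero.2 h0
      have hz : cval i = 0 := by rw [hcvaldef]; simp [hr]
      rw [hz]; exact zero_le
    · calc cval i
          ≤ (μ (cb (n := n) i))⁻¹ * ∫⁻ x in cb (n := n) i,
              (ENNReal.ofReal (t/2) + g x * phiInd (2 * g x) t) ∂μ :=
            mul_le_mul_right (lintegral_mono fun x => hpt t ht x) _
        _ = (μ (cb (n := n) i))⁻¹ * (ENNReal.ofReal (t/2) * μ (cb (n := n) i)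
              + ∫⁻ x in cb (n := n) i, g x * phiInd (2 * g x) t ∂μ) := by
            rw [lintegral_add_left measurable_const, setLIntegral_const]
        _ = ENNReal.ofReal (t/2) * ((μ (cb (n := n) i))⁻¹ * μ (cb (n := n) i))
              + (μ (cb (n := n) i))⁻¹ * ∫⁻ x in cb (n := n) i, g x * phiInd (2 * g x) t ∂μ := by
            ring
        _ = ENNReal.ofReal (t/2)
              + (μ (cb (n := n) i))⁻¹ * ∫⁻ x in cb (n := n) i, g x * phiInd (2 * g x) t ∂μ := by
            rw [ENNReal.inv_mul_cancel h0 (hfin i), mul_one]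
  have hM_t : ∀ t : ℝ, 0 < t → ∀ x, M x
      ≤ ENNReal.ofReal (t/2) + Mdy μ (fun y => g y * phiInd (2 * g y) t) x := by
    intro t ht x
    exact Mdy_le μ g fun i hx => (hcval_t t ht i).trans
      (add_le_add_right (Mdy_ge μ _ hx) _)
  have hweak2 : ∀ t : ℝ, 0 < t → ENNReal.ofReal t * μ {x | ENNReal.ofReal t < M x}
      ≤ 2 * ∫⁻ x, g x * phiInd (2 * g x) t ∂μ := by
    intro t ht
    have hEsub : {x | ENNReal.ofReal t < M x}
        ⊆ {x | ENNReal.ofReal (t/2) < Mdy μ (fun y => g y * phiInd (2 * g y) t) x} := by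
      intro x hx
      have h2 : ENNReal.ofReal t = ENNReal.ofReal (t/2) + ENNReal.ofReal (t/2) := by
        rw [← ENNReal.ofReal_add (by linarith) (by linarith)]; norm_num
      have h3 := lt_of_lt_of_le hx (hM_t t ht x)
      rw [h2] at h3
      exact (ENNReal.add_lt_add_iff_left ENNReal.ofReal_ne_top).1 h3
    have e2 : ENNReal.ofReal t = 2 * ENNReal.ofReal (t/2) := by
      rw [show (2:ℝ≥0∞) = ENNReal.ofReal 2 by simp, ← ENNReal.ofReal_mul (by norm_num)]
      congr 1; ring
    calc ENNReal.ofReal t * μ {x | ENNReal.ofReal t < M x}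
        ≤ ENNReal.ofReal t
            * μ {x | ENNReal.ofReal (t/2) < Mdy μ (fun y => g y * phiInd (2 * g y) t) x} :=
          mul_le_mul_right (measure_mono hEsub) _
      _ = 2 * (ENNReal.ofReal (t/2)
            * μ {x | ENNReal.ofReal (t/2) < Mdy μ (fun y => g y * phiInd (2 * g y) t) x}) := by
          rw [e2, mul_assoc]
      _ ≤ 2 * ∫⁻ x in {x | ENNReal.ofReal (t/2)
              < Mdy μ (fun y => g y * phiInd (2 * g y) t) x},
            g x * phiInd (2 * g x) t ∂μ :=
          mul_le_mul_right (weak_E μ _ hfin (ENNReal.ofReal_pos.2 (by linarith))) _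
      _ ≤ 2 * ∫⁻ x, g x * phiInd (2 * g x) t ∂μ :=
          mul_le_mul_right (setLIntegral_le_lintegral _ _) _
  have hG2 : Measurable fun x => 2 * g x := hg.const_mul 2
  have hbound_inner : (∫⁻ x, g x * ((2 * g x) ^ (p-1) / ENNReal.ofReal (p-1)) ∂μ)
      ≤ ((2:ℝ≥0∞) ^ (p-1) * (ENNReal.ofReal (p-1))⁻¹) * Ip := by
    rw [hIpdef, ← lintegral_const_mul' _ _
      (ENNReal.mul_ne_top (ENNReal.rpow_ne_top_of_nonneg hp1.le ENNReal.ofNat_ne_top)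
        (ENNReal.inv_ne_top.2 (ENNReal.ofReal_pos.2 hp1).ne'))]
    refine lintegral_mono fun x => le_of_eq ?_
    calc g x * ((2 * g x) ^ (p-1) / ENNReal.ofReal (p-1))
        = ((2:ℝ≥0∞) ^ (p-1) * (ENNReal.ofReal (p-1))⁻¹) * (g x * g x ^ (p-1)) := by
          rw [div_eq_mul_inv, ENNReal.mul_rpow_of_nonneg _ _ hp1.le]
          ring
      _ = ((2:ℝ≥0∞) ^ (p-1) * (ENNReal.ofReal (p-1))⁻¹) * g x ^ p := by
          congr 1
          nth_rewrite 1 [← ENNReal.rpow_one (g x)]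
          rw [← ENNReal.rpow_add_of_nonneg 1 (p-1) zero_le_one hp1.le]
          norm_num
  have hTne : T ≠ ⊤ := by
    have hTD : T ≤ ENNReal.ofReal p
        * (2 * ∫⁻ x, g x * ((2 * g x) ^ (p-1) / ENNReal.ofReal (p-1)) ∂μ) := by
      rw [hTlc]
      refine mul_le_mul_right ?_ _
      calc ∫⁻ t in Set.Ioi (0:ℝ),
            ENNReal.ofReal (t ^ (p-1)) * μ {x | ENNReal.ofReal t < M x} ∂volume
          ≤ ∫⁻ t in Set.Ioi (0:ℝ),
              2 * (ENNReal.ofReal (t ^ (p-2)) * ∫⁻ x, g x * phiInd (2 * g x) t ∂μ) ∂volume := by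
            refine lintegral_mono_ae ?_
            filter_upwards [ae_restrict_mem measurableSet_Ioi] with t ht'
            have ht : 0 < t := ht'
            rw [show t ^ (p-1) = t ^ (p-2) * t by
                rw [show p - 1 = (p-2) + 1 by ring, Real.rpow_add_one ht.ne' (p-2)],
              ENNReal.ofReal_mul (Real.rpow_nonneg ht.le _), mul_assoc]
            calc ENNReal.ofReal (t ^ (p-2)) * (ENNReal.ofReal t * μ {x | ENNReal.ofReal t < M x})
                ≤ ENNReal.ofReal (t ^ (p-2)) * (2 * ∫⁻ x, g x * phiInd (2 * g x) t ∂μ) :=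
                  mul_le_mul_right (hweak2 t ht) _
              _ = 2 * (ENNReal.ofReal (t ^ (p-2)) * ∫⁻ x, g x * phiInd (2 * g x) t ∂μ) :=
                  mul_left_comm _ _ _
        _ = 2 * ∫⁻ t in Set.Ioi (0:ℝ),
              ENNReal.ofReal (t ^ (p-2)) * ∫⁻ x, g x * phiInd (2 * g x) t ∂μ ∂volume :=
            lintegral_const_mul' 2 _ ENNReal.ofNat_ne_top
        _ = 2 * ∫⁻ x, g x * ((2 * g x) ^ (p-1) / ENNReal.ofReal (p-1)) ∂μ := by
            rw [bridge (fun x => 2 * g x) hG2]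
    have hfinal : T ≤ ENNReal.ofReal p
        * (2 * (((2:ℝ≥0∞) ^ (p-1) * (ENNReal.ofReal (p-1))⁻¹) * Ip)) :=
      hTD.trans (mul_le_mul_right (mul_le_mul_right hbound_inner _) _)
    refine ne_top_of_le_ne_top ?_ hfinal
    exact ENNReal.mul_ne_top ENNReal.ofReal_ne_top
      (ENNReal.mul_ne_top ENNReal.ofNat_ne_top
        (ENNReal.mul_ne_top
          (ENNReal.mul_ne_top (ENNReal.rpow_ne_top_of_nonneg hp1.le ENNReal.ofNat_ne_top)
            (ENNReal.inv_ne_top.2 (ENNReal.ofReal_pos.2 hp1).ne'))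
          hIp))
  -- conclusion
  rcases eq_or_ne T 0 with hT0 | hT0
  · have hz : (∑' Q : Idx n, a' Q * cval Q ^ p) = 0 := by
      refine le_antisymm ?_ (zero_le)
      rw [hT0, mul_zero] at hS
      exact hS
    rw [hz, ENNReal.zero_rpow_of_pos (by positivity : (0:ℝ) < 1/p)]
    exact zero_le
  · have hTr_ne0 : T ^ (1/r) ≠ 0 :=
      (ENNReal.rpow_pos (lt_of_le_of_ne (zero_le) (Ne.symm hT0)) hTne).ne'
    have hTr_netop : T ^ (1/r) ≠ ⊤ :=
      ENNReal.rpow_ne_top_of_nonneg (by positivity) hTne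
    have hsplit : T = T ^ (1/p) * T ^ (1/r) := by
      rw [← ENNReal.rpow_add _ _ hT0 hTne,
        show 1/p + 1/r = 1 by
          rw [one_div, one_div]; exact hpq.inv_add_inv_eq_one,
        ENNReal.rpow_one]
    have hcancel : T ^ (1/p) ≤ ENNReal.ofReal r * Ip ^ (1/p) := by
      have h2 : T ^ (1/p) * T ^ (1/r) ≤ (ENNReal.ofReal r * Ip ^ (1/p)) * T ^ (1/r) := by
        rw [← hsplit, mul_assoc]
        exact hTC
      exact (ENNReal.mul_le_mul_iff_left hTr_ne0 hTr_netop).1 h2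
    calc (∑' Q : Idx n, a' Q * cval Q ^ p) ^ (1/p)
        ≤ (A' * T) ^ (1/p) := ENNReal.rpow_le_rpow hS (by positivity)
      _ = A' ^ (1/p) * T ^ (1/p) := ENNReal.mul_rpow_of_nonneg _ _ (by positivity)
      _ ≤ A' ^ (1/p) * (ENNReal.ofReal r * Ip ^ (1/p)) := mul_le_mul_right hcancel _
      _ = A' ^ (1/p) * ENNReal.ofReal (p/(p-1)) * Ip ^ (1/p) := by
          rw [hrdef, mul_assoc]

end DCE

/-- Theorem 3.7: the dyadic Carleson embedding theorem. -/
theorem dyadic_carleson_embedding (n : ℕ) (hn : 1 ≤ n)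
    (w : En n → ℝ) (hw0 : ∀ x, 0 ≤ w x) (hwloc : LocallyIntegrable w volume)
    (hwpos : ∀ᵐ x : En n, 0 < w x)
    (a : ℤ × (Fin n → ℤ) → ℝ) (ha : ∀ Q, 0 ≤ a Q) (A : ℝ) (hA : 0 < A)
    (hCarl : ∀ R : ℤ × (Fin n → ℤ),
      (∑' Q : {Q : ℤ × (Fin n → ℤ) // dyadicCube n Q.1 Q.2 ⊆ dyadicCube n R.1 R.2},
        ENNReal.ofReal (a Q.1)) ≤ ENNReal.ofReal A * wMeas w (dyadicCube n R.1 R.2))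
    (p : ℝ) (hp : 1 < p) (f : En n → ℝ) (hf0 : ∀ x, 0 ≤ f x) (hfm : Measurable f)
    (hfLp : wnorm p w f < ⊤) :
    (∑' Q : ℤ × (Fin n → ℤ), ENNReal.ofReal (a Q) *
        ((wMeas w (dyadicCube n Q.1 Q.2))⁻¹ *
          ∫⁻ x in dyadicCube n Q.1 Q.2, ENNReal.ofReal (f x) * ENNReal.ofReal (w x)) ^ p) ^
        (1/p) ≤
      ENNReal.ofReal A ^ (1/p) * ENNReal.ofReal (p/(p-1)) * wnorm p w f := by
  classical
  have hWaem : AEMeasurable (fun x => ENNReal.ofReal (w x)) volume :=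
    (hwloc.aestronglyMeasurable.aemeasurable).ennreal_ofReal
  set W : En n → ℝ≥0∞ := fun x => ENNReal.ofReal (w x) with hWdef
  set μ : Measure (En n) := volume.withDensity W with hμdef
  haveI : SFinite μ := by rw [hμdef]; infer_instance
  have hg : Measurable fun x => ENNReal.ofReal (f x) := hfm.ennreal_ofReal
  have hwMeas : ∀ Q : ℤ × (Fin n → ℤ),
      wMeas w (dyadicCube n Q.1 Q.2) = μ (dyadicCube n Q.1 Q.2) := by
    intro Q
    rw [hμdef, withDensity_apply W (DCE.measurableSet_dyadicCube Q.1 Q.2)]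
    rfl
  have hsetint : ∀ Q : ℤ × (Fin n → ℤ),
      (∫⁻ x in dyadicCube n Q.1 Q.2, ENNReal.ofReal (f x) * ENNReal.ofReal (w x) ∂volume)
        = ∫⁻ x in dyadicCube n Q.1 Q.2, ENNReal.ofReal (f x) ∂μ := by
    intro Q
    rw [hμdef, restrict_withDensity (DCE.measurableSet_dyadicCube Q.1 Q.2),
      lintegral_withDensity_eq_lintegral_mul₀ hWaem.restrict hg.aemeasurable]
    exact lintegral_congr fun x => (mul_comm _ _)
  have hnorm : wnorm p w f = (∫⁻ x, ENNReal.ofReal (f x) ^ p ∂μ) ^ (1/p) := by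
    rw [wnorm, wnormE, hμdef,
      lintegral_withDensity_eq_lintegral_mul₀ hWaem ((hg.pow_const p).aemeasurable)]
    congr 1
    refine lintegral_congr fun x => ?_
    rw [abs_of_nonneg (hf0 x)]
    exact mul_comm _ _
  have hfin : ∀ i : DCE.Idx n, μ (DCE.cb (n := n) i) ≠ ⊤ := by
    intro i
    obtain ⟨C, hCcomp, hsub⟩ := DCE.isCompact_closure_dyadic (n := n) i.1 i.2
    have hint : IntegrableOn w (DCE.cb (n := n) i) volume :=
      (hwloc.integrableOn_isCompact hCcomp).mono_set hsub
    have hμi : μ (DCE.cb (n := n) i) = ∫⁻ x in DCE.cb (n := n) i, W x ∂volume := by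
      rw [hμdef, withDensity_apply W (DCE.measurableSet_cb i)]
    rw [hμi]
    refine ne_top_of_le_ne_top hint.2.ne ?_
    exact lintegral_mono fun x => Real.ofReal_le_enorm (w x)
  have hC : ∀ R : DCE.Idx n,
      (∑' Q : {Q : DCE.Idx n // DCE.cb (n := n) Q ⊆ DCE.cb R}, ENNReal.ofReal (a Q.1))
        ≤ ENNReal.ofReal A * μ (DCE.cb (n := n) R) := by
    intro R
    have h := hCarl R
    rw [hwMeas R] at h
    exact h
  have hIp : (∫⁻ x, ENNReal.ofReal (f x) ^ p ∂μ) ≠ ⊤ := by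
    intro h
    rw [hnorm, h] at hfLp
    rw [ENNReal.top_rpow_of_pos (by positivity : (0:ℝ) < 1/p)] at hfLp
    exact absurd hfLp (lt_irrefl _)
  have hmain := DCE.main μ hfin (fun Q => ENNReal.ofReal (a Q))
    (fun i => ENNReal.ofReal_ne_top) (ENNReal.ofReal A) ENNReal.ofReal_ne_top hC p hp
    (fun x => ENNReal.ofReal (f x)) hg (fun x => ENNReal.ofReal_ne_top) hIp
  rw [hnorm]
  refine le_trans (le_of_eq ?_) hmain
  refine congrArg (· ^ (1/p)) (tsum_congr fun Q => ?_)
  rw [hwMeas Q, hsetint Q]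
  rfl
end
end
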